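/- Let G be the subring of ℂ[[X]] consisting of power series Σ_{n≥0} a_n X^n for which there exist A, C > 0 with |a_n| ≤ A·C^n·n! for all n. Then the full ring of formal power series ℂ[[X]], regarded as a G-module via the inclusion G ⊆ ℂ[[X]], is a faithfully flat G-module. -/

import Mathlib

set_option synthInstance.maxHeartbeats 1000000

/-- The Gevrey-type growth condition defining the ring `G = k₀ = W_pt(0)` of the paper
(written in the variable `X = τ⁻¹`): `|a_n| ≤ A·C^n·n!` for some `A, C > 0`. -/
def Gevrey (f : PowerSeries ℂ) : Prop :=
  ∃ A C : ℝ, 0 < A ∧ 0 < C ∧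
    ∀ n : ℕ, ‖PowerSeries.coeff n f‖ ≤ A * C ^ n * n.factorial

open PowerSeries Finset in
lemma gevrey_X : Gevrey (PowerSeries.X : PowerSeries ℂ) := by
  refine ⟨1, 1, one_pos, one_pos, fun n => ?_⟩
  have h1 : (1:ℝ) ≤ (n.factorial : ℝ) := by exact_mod_cast n.factorial_pos
  rw [PowerSeries.coeff_X]
  split
  · simpa using h1
  · simp

open Finset in
/-- geometric-type sum identity -/
lemma gevrey_geom_aux (C D : ℝ) (n : ℕ) :
    (D - C) * (∑ i ∈ Finset.range (n+1), if i = 0 then (0:ℝ) else C^i * D^(n-i))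
      = C * (D^n - C^n) := by
  induction n with
  | zero => simp
  | succ n ih =>
    have h1 : ∑ i ∈ Finset.range (n+1), (if i = 0 then (0:ℝ) else C^i * D^(n+1-i))
        = D * ∑ i ∈ Finset.range (n+1), (if i = 0 then (0:ℝ) else C^i * D^(n-i)) := by
      rw [Finset.mul_sum]
      refine Finset.sum_congr rfl fun i hi => ?_
      rcases eq_or_ne i 0 with rfl | h
      · simp
      · have hi' : i ≤ n := Nat.lt_succ_iff.mp (Finset.mem_range.mp hi)
        have h2 : n + 1 - i = (n - i) + 1 := by omega
        rw [if_neg h, if_neg h, h2, pow_succ]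
        ring
    rw [Finset.sum_range_succ, h1, if_neg (Nat.succ_ne_zero n), Nat.sub_self, pow_zero, mul_one]
    linear_combination D * ih

open PowerSeries Finset in
lemma gevrey_inv {f : PowerSeries ℂ} (hf : Gevrey f)
    (hc : PowerSeries.constantCoeff f ≠ 0) : Gevrey f⁻¹ := by
  obtain ⟨A, C, hA, hC, hb⟩ := hf
  set c := PowerSeries.constantCoeff f with hcdef
  set K : ℝ := ‖c⁻¹‖ with hKdef
  have hK0 : 0 < K := by
    rw [hKdef, norm_pos_iff]
    exact inv_ne_zero hc
  set B : ℝ := max K 1 with hBdef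
  have hB1 : (1:ℝ) ≤ B := le_max_right _ _
  have hB0 : 0 < B := lt_of_lt_of_le one_pos hB1
  have hKB : K ≤ B := le_max_left _ _
  set D : ℝ := C * (1 + A * K) with hDdef
  have hD0 : 0 < D := by positivity
  have hCD : C < D := by nlinarith [mul_pos hA hK0, mul_pos hC (mul_pos hA hK0)]
  have hDC : D - C = C * (A * K) := by rw [hDdef]; ring
  refine ⟨B, D, hB0, hD0, ?_⟩
  intro n
  induction n using Nat.strong_induction_on with
  | _ n ih =>
  rcases eq_or_ne n 0 with rfl | hn
  · rw [PowerSeries.coeff_inv, if_pos rfl]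
    simp only [pow_zero, Nat.factorial_zero, Nat.cast_one, mul_one]
    exact hKB
  · rw [PowerSeries.coeff_inv, if_neg hn, norm_mul, norm_neg]
    rw [Finset.Nat.sum_antidiagonal_eq_sum_range_succ_mk]
    have hnorm : ‖c⁻¹‖ = K := rfl
    rw [hnorm]
    set g : ℝ := ∑ i ∈ Finset.range (n+1), if i = 0 then (0:ℝ) else C^i * D^(n-i) with hgdef
    have hsum : ‖∑ i ∈ Finset.range (n+1),
        (if n - i < n then PowerSeries.coeff i f * PowerSeries.coeff (n - i) f⁻¹ else 0)‖
        ≤ (A * B * n.factorial) * g := by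
      calc ‖∑ i ∈ Finset.range (n+1),
          (if n - i < n then PowerSeries.coeff i f * PowerSeries.coeff (n - i) f⁻¹ else 0)‖
          ≤ ∑ i ∈ Finset.range (n+1),
            ‖(if n - i < n then PowerSeries.coeff i f * PowerSeries.coeff (n - i) f⁻¹ else 0)‖ :=
            norm_sum_le _ _
        _ ≤ ∑ i ∈ Finset.range (n+1),
            (if i = 0 then (0:ℝ) else (A * B * n.factorial) * (C^i * D^(n-i))) := by
            refine Finset.sum_le_sum fun i hi => ?_
            have hin : i ≤ n := Nat.lt_succ_iff.mp (Finset.mem_range.mp hi)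
            rcases eq_or_ne i 0 with rfl | hi0
            · simp
            · have hlt : n - i < n := Nat.sub_lt (Nat.pos_of_ne_zero hn) (Nat.pos_of_ne_zero hi0)
              rw [if_pos hlt, if_neg hi0, norm_mul]
              have hfac : (i.factorial : ℝ) * ((n-i).factorial : ℝ) ≤ (n.factorial : ℝ) := by
                have hd : i.factorial * (n-i).factorial ∣ n.factorial := by
                  have := Nat.factorial_mul_factorial_dvd_factorial_add i (n - i)
                  rwa [Nat.add_sub_cancel' hin] at this
                exact_mod_cast Nat.le_of_dvd n.factorial_pos hd
              have h1 := hb i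
              have h2 := ih (n - i) hlt
              have hbn : ‖PowerSeries.coeff (n-i) f⁻¹‖ ≥ 0 := norm_nonneg _
              calc ‖PowerSeries.coeff i f‖ * ‖PowerSeries.coeff (n - i) f⁻¹‖
                  ≤ (A * C ^ i * i.factorial) * (B * D ^ (n-i) * (n-i).factorial) := by
                    apply mul_le_mul h1 h2 (norm_nonneg _)
                    positivity
                _ = (A * B * (C^i * D^(n-i))) * ((i.factorial : ℝ) * ((n-i).factorial : ℝ)) := by
                    ring
                _ ≤ (A * B * (C^i * D^(n-i))) * (n.factorial : ℝ) := by
                    apply mul_le_mul_of_nonneg_left hfac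
                    positivity
                _ = (A * B * n.factorial) * (C^i * D^(n-i)) := by ring
        _ = (A * B * n.factorial) * g := by
            rw [hgdef, Finset.mul_sum]
            refine Finset.sum_congr rfl fun i _ => ?_
            split <;> simp
    have hgle : (A * K) * g ≤ D ^ n := by
      have h1 : (D - C) * g = C * (D^n - C^n) := gevrey_geom_aux C D n
      rw [hDC] at h1
      have h2 : C * ((A * K) * g) ≤ C * D ^ n := by
        have hCn : (0:ℝ) ≤ C ^ n := by positivity
        nlinarith
      exact le_of_mul_le_mul_left h2 hC
    calc K * ‖∑ i ∈ Finset.range (n+1),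
        (if n - i < n then PowerSeries.coeff i f * PowerSeries.coeff (n - i) f⁻¹ else 0)‖
        ≤ K * ((A * B * n.factorial) * g) := by
          apply mul_le_mul_of_nonneg_left hsum hK0.le
      _ = (B * n.factorial) * ((A * K) * g) := by ring
      _ ≤ (B * n.factorial) * D ^ n := by
          apply mul_le_mul_of_nonneg_left hgle
          positivity
      _ = B * D ^ n * n.factorial := by ring

open PowerSeries Finset in
lemma gevrey_shift {g : PowerSeries ℂ} (hg : Gevrey g) (n : ℕ)
    (h0 : ∀ m < n, PowerSeries.coeff m g = 0) :
    ∃ h : PowerSeries ℂ, Gevrey h ∧ g = PowerSeries.X ^ n * h := by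
  obtain ⟨h, hd⟩ := PowerSeries.X_pow_dvd_iff.mpr h0
  refine ⟨h, ?_, hd⟩
  obtain ⟨A, C, hA, hC, hb⟩ := hg
  refine ⟨A * (2*C)^n * n.factorial, 2*C, by positivity, by positivity, fun m => ?_⟩
  have hcm : PowerSeries.coeff m h = PowerSeries.coeff (m + n) g := by
    rw [hd, PowerSeries.coeff_X_pow_mul]
  rw [hcm]
  have hch : ((m+n).choose n : ℝ) ≤ 2^(m+n) := by
    have h1 : (m+n).choose n ≤ ∑ i ∈ Finset.range (m+n+1), (m+n).choose i :=
      Finset.single_le_sum (fun i _ => Nat.zero_le _) (Finset.mem_range.mpr (by omega))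
    rw [Nat.sum_range_choose] at h1
    exact_mod_cast h1
  have h2 : ((m+n).factorial : ℝ) ≤ 2^(m+n) * m.factorial * n.factorial := by
    have h3 := Nat.add_choose_mul_factorial_mul_factorial m n
    have h4 : ((m+n).factorial : ℝ) = ((m+n).choose n : ℝ) * m.factorial * n.factorial := by
      exact_mod_cast h3.symm
    rw [h4]
    have : (0:ℝ) ≤ (m.factorial : ℝ) * n.factorial := by positivity
    calc ((m+n).choose n : ℝ) * m.factorial * n.factorial
        = ((m+n).choose n : ℝ) * ((m.factorial : ℝ) * n.factorial) := by ring
      _ ≤ 2^(m+n) * ((m.factorial : ℝ) * n.factorial) := by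
          apply mul_le_mul_of_nonneg_right hch this
      _ = 2^(m+n) * m.factorial * n.factorial := by ring
  calc ‖PowerSeries.coeff (m+n) g‖ ≤ A * C^(m+n) * (m+n).factorial := hb (m+n)
    _ ≤ A * C^(m+n) * (2^(m+n) * m.factorial * n.factorial) := by
        apply mul_le_mul_of_nonneg_left h2
        positivity
    _ = (A * (2*C)^n * n.factorial) * (2*C)^m * m.factorial := by
        rw [mul_pow, pow_add, pow_add]
        ring

open scoped TensorProduct in
/-- Over a ring in which every ideal is principal, a module on which every nonzero scalar
acts injectively is flat. -/
lemma flat_of_principal_of_regular {R : Type*} {M : Type*} [CommRing R] [AddCommGroup M]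
    [Module R M] (hprin : ∀ I : Ideal R, ∃ a : R, I = Ideal.span {a})
    (hreg : ∀ a : R, a ≠ 0 → Function.Injective fun m : M => a • m) :
    Module.Flat R M := by
  rw [Module.Flat.iff_rTensor_injective]
  intro I _
  obtain ⟨a, rfl⟩ := hprin I
  rcases eq_or_ne a 0 with rfl | ha
  · haveI : Subsingleton (Ideal.span {(0:R)}) := by
      rw [show Ideal.span {(0:R)} = ⊥ from Ideal.span_singleton_eq_bot.mpr rfl]
      infer_instance
    intro x y _
    exact Subsingleton.elim x y
  · have haI : a ∈ Ideal.span {a} := Ideal.subset_span rfl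
    have hψsurj : Function.Surjective
        (LinearMap.toSpanSingleton R (Ideal.span {a}) ⟨a, haI⟩) := by
      rintro ⟨y, hy⟩
      obtain ⟨c, hc⟩ := Ideal.mem_span_singleton'.mp hy
      exact ⟨c, Subtype.ext (by simpa [LinearMap.toSpanSingleton_apply, smul_eq_mul] using hc)⟩
    have hcomp : (Ideal.span {a}).subtype ∘ₗ
        LinearMap.toSpanSingleton R (Ideal.span {a}) ⟨a, haI⟩
        = LinearMap.toSpanSingleton R R a := by
      ext
      simp [LinearMap.toSpanSingleton_apply]
    have hmaps : (TensorProduct.lid R M).toLinearMap ∘ₗ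
          LinearMap.rTensor M (LinearMap.toSpanSingleton R R a)
        = LinearMap.lsmul R M a ∘ₗ (TensorProduct.lid R M).toLinearMap := by
      apply TensorProduct.ext'
      intro s m
      simp only [LinearMap.coe_comp, Function.comp_apply, LinearMap.rTensor_tmul,
        LinearMap.toSpanSingleton_apply, LinearEquiv.coe_coe, TensorProduct.lid_tmul,
        LinearMap.lsmul_apply, smul_eq_mul, smul_smul]
      rw [mul_comm]
    have hainj : Function.Injective
        (LinearMap.rTensor M (LinearMap.toSpanSingleton R R a)) := by
      intro x y hxy
      have h1 : a • (TensorProduct.lid R M) x = a • (TensorProduct.lid R M) y := by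
        have hx := LinearMap.congr_fun hmaps x
        have hy := LinearMap.congr_fun hmaps y
        simp only [LinearMap.coe_comp, Function.comp_apply, LinearEquiv.coe_coe,
          LinearMap.lsmul_apply] at hx hy
        rw [← hx, ← hy, hxy]
      exact (TensorProduct.lid R M).injective (hreg a ha h1)
    have hfact : LinearMap.rTensor M (Ideal.span {a}).subtype ∘ₗ
        LinearMap.rTensor M (LinearMap.toSpanSingleton R (Ideal.span {a}) ⟨a, haI⟩)
        = LinearMap.rTensor M (LinearMap.toSpanSingleton R R a) := by
      rw [← LinearMap.rTensor_comp, hcomp]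
    have hcomp2 : Function.Injective
        (⇑(LinearMap.rTensor M (Ideal.span {a}).subtype) ∘
          ⇑(LinearMap.rTensor M (LinearMap.toSpanSingleton R (Ideal.span {a}) ⟨a, haI⟩))) := by
      rw [← LinearMap.coe_comp, hfact]
      exact hainj
    exact hcomp2.of_comp_right (LinearMap.rTensor_surjective M hψsurj)

open scoped TensorProduct in
set_option maxHeartbeats 1000000 in

/-- the full ring `ℂ[[X]]` of formal power series, viewed as a module over
`G` via the inclusion `G ⊆ ℂ[[X]]`, is faithfully flat over `G`.  Here `G` is realized
as a subalgebra `S` of `ℂ[[X]]`. -/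
theorem powerSeries_faithfullyFlat_over_gevrey (S : Subalgebra ℂ (PowerSeries ℂ))
    (hS : (S : Set (PowerSeries ℂ)) = {f | Gevrey f}) :
    Module.FaithfullyFlat S (PowerSeries ℂ) := by
  have hmem : ∀ f : PowerSeries ℂ, f ∈ S ↔ Gevrey f := fun f => by
    rw [← SetLike.mem_coe, hS]; exact Iff.rfl
  have hXS : (PowerSeries.X : PowerSeries ℂ) ∈ S := (hmem _).mpr gevrey_X
  -- smul is multiplication
  have hsmul : ∀ (a : S) (m : PowerSeries ℂ), a • m = (a : PowerSeries ℂ) * m :=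
    fun a m => Algebra.smul_def a m
  -- units
  have hunit : ∀ a : S, PowerSeries.constantCoeff (a : PowerSeries ℂ) ≠ 0 → IsUnit a := by
    intro a ha
    have hinv : ((a : PowerSeries ℂ)⁻¹) ∈ S :=
      (hmem _).mpr (gevrey_inv ((hmem _).mp a.2) ha)
    exact IsUnit.of_mul_eq_one (a := a) ⟨_, hinv⟩
      (Subtype.ext (PowerSeries.mul_inv_cancel _ ha))
  -- division by powers of X
  have hdvd : ∀ (n : ℕ) (a : S), (∀ m < n, PowerSeries.coeff m (a : PowerSeries ℂ) = 0) →
      ∃ b : S, (a : PowerSeries ℂ) = PowerSeries.X ^ n * (b : PowerSeries ℂ) := by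
    intro n a h0
    obtain ⟨h, hh, hd⟩ := gevrey_shift ((hmem _).mp a.2) n h0
    exact ⟨⟨h, (hmem _).mpr hh⟩, hd⟩
  -- every ideal is principal
  have hprin : ∀ I : Ideal S, ∃ a : S, I = Ideal.span {a} := by
    intro I
    by_cases hI : I = ⊥
    · exact ⟨0, by rw [hI]; exact (Ideal.span_singleton_eq_bot.mpr rfl).symm⟩
    obtain ⟨f, hfI, hf0⟩ := Submodule.exists_mem_ne_zero_of_ne_bot hI
    have hf0' : (f : PowerSeries ℂ) ≠ 0 := fun h => hf0 (Subtype.ext h)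
    have hPex : ∃ n, ∃ g ∈ I, PowerSeries.coeff n (g : PowerSeries ℂ) ≠ 0 := by
      by_contra hcon
      push_neg at hcon
      exact hf0' (PowerSeries.ext fun n => hcon n f hfI)
    classical
    set n := Nat.find hPex with hn
    obtain ⟨g, hgI, hgn⟩ := Nat.find_spec hPex
    have hmin : ∀ m < n, ∀ h ∈ I, PowerSeries.coeff m (h : PowerSeries ℂ) = 0 := by
      intro m hm h hh
      by_contra hne
      exact Nat.find_min hPex hm ⟨h, hh, hne⟩
    obtain ⟨b, hgb⟩ := hdvd n g (fun m hm => hmin m hm g hgI)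
    have hbc : PowerSeries.constantCoeff (b : PowerSeries ℂ) ≠ 0 := by
      intro h0
      apply hgn
      rw [hgb]
      have := PowerSeries.coeff_X_pow_mul (b : PowerSeries ℂ) n 0
      rw [zero_add] at this
      rw [this, PowerSeries.coeff_zero_eq_constantCoeff, h0]
    have hXn : (PowerSeries.X : PowerSeries ℂ) ^ n ∈ S := pow_mem hXS n
    set x : S := ⟨PowerSeries.X ^ n, hXn⟩ with hx
    have hgbx : g = x * b := Subtype.ext (by rw [hgb]; rfl)
    obtain ⟨u, hu⟩ := hunit b hbc
    have hxI : x ∈ I := by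
      have h1 : g * (↑u⁻¹ : S) ∈ I := I.mul_mem_right _ hgI
      have h2 : g * (↑u⁻¹ : S) = x := by
        rw [hgbx, ← hu, mul_assoc, Units.mul_inv, mul_one]
      rwa [h2] at h1
    refine ⟨x, le_antisymm ?_ ?_⟩
    · intro h hh
      obtain ⟨c, hc⟩ := hdvd n h (fun m hm => hmin m hm h hh)
      have : h = x * c := Subtype.ext (by rw [hc]; rfl)
      exact Ideal.mem_span_singleton.mpr ⟨c, this⟩
    · rw [Ideal.span_le, Set.singleton_subset_iff]
      exact hxI
  -- regularity of scalars
  have hreg : ∀ a : S, a ≠ 0 → Function.Injective fun m : PowerSeries ℂ => a • m := by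
    intro a ha m₁ m₂ h
    simp only [hsmul] at h
    have ha' : (a : PowerSeries ℂ) ≠ 0 := fun h0 => ha (Subtype.ext h0)
    exact mul_left_cancel₀ ha' h
  haveI : Module.Flat (↥S) (PowerSeries ℂ) := flat_of_principal_of_regular hprin hreg
  constructor
  · intro m hm htop
    -- the kernel of the constant coefficient map is a proper S-submodule containing m • ⊤
    set N : Submodule S (PowerSeries ℂ) :=
      { carrier := {f | PowerSeries.constantCoeff f = 0}
        add_mem' := fun {f g} hf hg => by
          simp only [Set.mem_setOf_eq, map_add] at *
          rw [hf, hg, add_zero]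
        zero_mem' := by simp
        smul_mem' := fun a f hf => by
          simp only [Set.mem_setOf_eq] at *
          rw [hsmul, map_mul, hf, mul_zero] } with hN
    have hle : m • (⊤ : Submodule S (PowerSeries ℂ)) ≤ N := by
      refine Submodule.smul_le.mpr fun a ha f _ => ?_
      have ha0 : PowerSeries.constantCoeff (a : PowerSeries ℂ) = 0 := by
        by_contra hne
        have := hunit a hne
        exact hm.ne_top (m.eq_top_of_isUnit_mem ha this)
      show PowerSeries.constantCoeff (a • f) = 0
      rw [hsmul, map_mul, ha0, zero_mul]
    have h1N : (1 : PowerSeries ℂ) ∈ N := by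
      rw [htop] at hle
      exact hle Submodule.mem_top
    have : PowerSeries.constantCoeff (1 : PowerSeries ℂ) = 0 := h1N
    rw [map_one] at this
    exact one_ne_zero this
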